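/- arXiv:1810.03785 — 2 statements merged into one kernel-verified Lean document; each statement's English description precedes it below -/
import Mathlib

section
/- (Block Gershgorin theorem) Let A be a Hermitian matrix partitioned into blocks A_{ij} with square diagonal blocks A_{ii}. Then every eigenvalue λ of A lies in the union over i and over eigenvalues μ of A_{ii} of disks centered at μ with radius equal to Σ_{j≠i} σ_max(A_{ij}). -/
open Matrix

/-- The largest singular value of a complex matrix, i.e. the operator norm of the
associated linear map between Euclidean spaces. -/
noncomputable def sigmaMaxC {m n : Type*} [Fintype m] [Fintype n] [DecidableEq n]
    (A : Matrix m n ℂ) : ℝ :=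
  ‖LinearMap.toContinuousLinearMap (Matrix.toEuclideanLin A)‖

private lemma eucl_norm_sq {n : Type*} [Fintype n] (x : EuclideanSpace ℂ n) :
    ‖x‖ ^ 2 = ∑ i, ‖x i‖ ^ 2 := by
  rw [EuclideanSpace.norm_eq, Real.sq_sqrt]
  positivity

private lemma sigmaMaxC_bound {m n : Type*} [Fintype m] [Fintype n] [DecidableEq n]
    (M : Matrix m n ℂ) (x : EuclideanSpace ℂ n) :
    ‖Matrix.toEuclideanLin M x‖ ≤ sigmaMaxC M * ‖x‖ := by
  simpa [sigmaMaxC] using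
    (LinearMap.toContinuousLinearMap (Matrix.toEuclideanLin M)).le_opNorm x

private lemma herm_lower {n : Type*} [Fintype n] [DecidableEq n] [Nonempty n]
    {B : Matrix n n ℂ} (hB : B.IsHermitian) (μ : ℂ) (x : EuclideanSpace ℂ n) :
    ∃ ν ∈ spectrum ℂ B, ‖μ - ν‖ * ‖x‖ ≤ ‖Matrix.toEuclideanLin B x - μ • x‖ := by
  have hS : (Matrix.toEuclideanLin B).IsSymmetric :=
    Matrix.isHermitian_iff_isSymmetric.1 hB
  have hn : Module.finrank ℂ (EuclideanSpace ℂ n) = Fintype.card n :=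
    finrank_euclideanSpace
  set b := hS.eigenvectorBasis hn with hbdef
  set eig := hS.eigenvalues hn with heigdef
  haveI : Nonempty (Fin (Fintype.card n)) := ⟨⟨0, Fintype.card_pos⟩⟩
  obtain ⟨k, -, hk⟩ := Finset.exists_min_image Finset.univ
    (fun j => ‖μ - (eig j : ℂ)‖) Finset.univ_nonempty
  refine ⟨(eig k : ℂ), ?_, ?_⟩
  · rw [← Matrix.spectrum_toEuclideanLin (A := B) (𝕜 := ℂ)]
    exact (hS.hasEigenvalue_eigenvalues hn k).mem_spectrum
  · set y := Matrix.toEuclideanLin B x - μ • x with hy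
    have key : ∀ j, b.repr y j = ((eig j : ℂ) - μ) * b.repr x j := by
      intro j
      rw [b.repr_apply_apply, b.repr_apply_apply, hy, inner_sub_right, inner_smul_right]
      have h1 : (inner ℂ (b j) (Matrix.toEuclideanLin B x) : ℂ)
          = (eig j : ℂ) * inner ℂ (b j) x := by
        rw [← hS (b j) x, hS.apply_eigenvectorBasis, inner_smul_left]
        simp [Complex.conj_ofReal]
        rfl
      rw [h1]; ring
    have hx2 : ‖x‖ ^ 2 = ∑ j, ‖b.repr x j‖ ^ 2 := by
      rw [← b.repr.norm_map x, eucl_norm_sq]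
    have hy2 : ‖y‖ ^ 2 = ∑ j, ‖b.repr y j‖ ^ 2 := by
      rw [← b.repr.norm_map y, eucl_norm_sq]
    have hineq : (‖μ - (eig k : ℂ)‖ * ‖x‖) ^ 2 ≤ ‖y‖ ^ 2 := by
      rw [mul_pow, hx2, hy2, Finset.mul_sum]
      refine Finset.sum_le_sum fun j _ => ?_
      rw [key j, norm_mul, mul_pow]
      have h1 : ‖μ - (eig k : ℂ)‖ ≤ ‖(eig j : ℂ) - μ‖ :=
        (hk j (Finset.mem_univ j)).trans_eq (norm_sub_rev _ _)
      exact mul_le_mul_of_nonneg_right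
        (pow_le_pow_left₀ (norm_nonneg _) h1 2) (by positivity)
    have h0 : 0 ≤ ‖μ - (eig k : ℂ)‖ * ‖x‖ := by positivity
    nlinarith [norm_nonneg y]

/-- **Block Gershgorin theorem.** Every eigenvalue of a Hermitian block-partitioned
matrix lies in a disk centered at an eigenvalue of some diagonal block `A_{ii}`,
with radius the sum of the largest singular values of the off-diagonal blocks in
block-row `i`. -/
theorem block_gershgorin {L : ℕ} (d : Fin L → ℕ)
    (A : Matrix ((i : Fin L) × Fin (d i)) ((i : Fin L) × Fin (d i)) ℂ)
    (hA : A.IsHermitian) (μ : ℂ) (hμ : μ ∈ spectrum ℂ A) :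
    ∃ i : Fin L, ∃ ν ∈ spectrum ℂ (A.submatrix (Sigma.mk i) (Sigma.mk i)),
      ‖μ - ν‖ ≤ ∑ j ∈ Finset.univ.erase i,
        sigmaMaxC (A.submatrix (Sigma.mk i) (Sigma.mk j)) := by
  classical
  rw [← Matrix.spectrum_toEuclideanLin (A := A) (𝕜 := ℂ), ← Module.End.hasEigenvalue_iff_mem_spectrum] at hμ
  obtain ⟨v, hv⟩ := hμ.exists_hasEigenvector
  set v' : ((i : Fin L) × Fin (d i)) → ℂ := WithLp.equiv 2 _ v with hv'def
  have hAv : A *ᵥ v' = μ • v' := by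
    have h := hv.apply_eq_smul
    have h2 := congrArg (WithLp.equiv 2 _) h
    simpa [Matrix.toEuclideanLin_apply, hv'def] using h2
  have hvne : v' ≠ 0 := by
    intro h
    exact hv.2 ((WithLp.equiv 2 _).injective (by simpa [hv'def] using h))
  obtain ⟨p, hp⟩ : ∃ p, v' p ≠ 0 := by
    by_contra h
    push_neg at h
    exact hvne (funext h)
  haveI : Nonempty (Fin L) := ⟨p.1⟩
  -- the blocks of the eigenvector
  set blk : (j : Fin L) → EuclideanSpace ℂ (Fin (d j)) :=
    fun j => (WithLp.equiv 2 _).symm (fun k => v' ⟨j, k⟩) with hblkdef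
  obtain ⟨i, -, hi⟩ := Finset.exists_max_image Finset.univ
    (fun j => ‖blk j‖) Finset.univ_nonempty
  have hblkp : blk p.1 ≠ 0 := by
    intro h
    apply hp
    have := congrFun (congrArg (WithLp.equiv 2 _) h) p.2
    simpa [Sigma.eta, hblkdef] using this
  have hpos : 0 < ‖blk i‖ :=
    lt_of_lt_of_le (norm_pos_iff.2 hblkp) (hi p.1 (Finset.mem_univ _))
  haveI : Nonempty (Fin (d i)) := by
    rcases Nat.eq_zero_or_pos (d i) with h | h
    · exfalso
      have : blk i = 0 := by
        haveI : IsEmpty (Fin (d i)) := by rw [h]; infer_instance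
        exact Subsingleton.elim _ _
      rw [this, norm_zero] at hpos
      exact lt_irrefl _ hpos
    · exact ⟨⟨0, h⟩⟩
  set w : (j : Fin L) → EuclideanSpace ℂ (Fin (d i)) :=
    fun j => (WithLp.equiv 2 _).symm
      ((A.submatrix (Sigma.mk (β := fun i => Fin (d i)) i)
        (Sigma.mk (β := fun i => Fin (d i)) j)) *ᵥ fun l => v' ⟨j, l⟩) with hwdef
  -- block decomposition of the eigen-equation
  have hsum : ∑ j, w j = μ • blk i := by
    apply (WithLp.linearEquiv 2 ℂ (Fin (d i) → ℂ)).injective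
    rw [map_sum, _root_.map_smul]
    funext k
    rw [Finset.sum_apply]
    have hcoord : ∀ j, (WithLp.linearEquiv 2 ℂ (Fin (d i) → ℂ)) (w j) k
        = ∑ l, A ⟨i, k⟩ ⟨j, l⟩ * v' ⟨j, l⟩ := fun j => rfl
    simp_rw [hcoord]
    have h1 : (A *ᵥ v') ⟨i, k⟩ = μ * v' ⟨i, k⟩ := by rw [hAv]; rfl
    have h2 : (A *ᵥ v') ⟨i, k⟩ = ∑ j, ∑ l, A ⟨i, k⟩ ⟨j, l⟩ * v' ⟨j, l⟩ := by
      show (∑ q, A ⟨i, k⟩ q * v' q) = _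
      rw [← Finset.univ_sigma_univ, Finset.sum_sigma]
    rw [← h2, h1]
    rfl
  set B := A.submatrix (Sigma.mk i) (Sigma.mk i) with hBdef
  have hB : B.IsHermitian := hA.submatrix _
  have hmain : Matrix.toEuclideanLin B (blk i) - μ • blk i
      = -∑ j ∈ Finset.univ.erase i, w j := by
    have hwi : Matrix.toEuclideanLin B (blk i) = w i := rfl
    rw [hwi, ← hsum, ← Finset.add_sum_erase _ _ (Finset.mem_univ i)]
    abel
  obtain ⟨ν, hν, hlow⟩ := herm_lower hB μ (blk i)
  refine ⟨i, ν, hν, ?_⟩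
  have hup : ‖Matrix.toEuclideanLin B (blk i) - μ • blk i‖
      ≤ (∑ j ∈ Finset.univ.erase i, sigmaMaxC (A.submatrix (Sigma.mk i) (Sigma.mk j)))
        * ‖blk i‖ := by
    rw [hmain, norm_neg]
    refine le_trans (norm_sum_le _ _) ?_
    rw [Finset.sum_mul]
    refine Finset.sum_le_sum fun j _ => ?_
    have h1 : ‖w j‖ ≤ sigmaMaxC (A.submatrix (Sigma.mk i) (Sigma.mk j)) * ‖blk j‖ := by
      have : w j = Matrix.toEuclideanLin (A.submatrix (Sigma.mk i) (Sigma.mk j)) (blk j) :=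
        rfl
      rw [this]
      exact sigmaMaxC_bound _ _
    refine h1.trans (mul_le_mul_of_nonneg_left (hi j (Finset.mem_univ j)) ?_)
    exact norm_nonneg _
  have := hlow.trans hup
  exact le_of_mul_le_mul_right this hpos
end

section
/- As a corollary of the block Gershgorin theorem, the maximum eigenvalue of a Hermitian block-partitioned matrix A satisfies λ_max(A) ≤ max_i [ λ_max(A_{ii}) + Σ_{j≠i} σ_max(A_{ij}) ]. -/
open Matrix

/-- The largest eigenvalue of a Hermitian complex matrix. -/
noncomputable def lambdaMaxC {n : Type*} [Fintype n] [DecidableEq n]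
    {A : Matrix n n ℂ} (hA : A.IsHermitian) : ℝ :=
  ⨆ i, hA.eigenvalues i

lemma sigmaMaxC_nonneg {m n : Type*} [Fintype m] [Fintype n] [DecidableEq n]
    (A : Matrix m n ℂ) : 0 ≤ sigmaMaxC A := norm_nonneg _

lemma norm_toEuclideanLin_le {m n : Type*} [Fintype m] [Fintype n] [DecidableEq n]
    (A : Matrix m n ℂ) (x : EuclideanSpace ℂ n) :
    ‖Matrix.toEuclideanLin A x‖ ≤ sigmaMaxC A * ‖x‖ := by
  simpa [sigmaMaxC] using (LinearMap.toContinuousLinearMap (Matrix.toEuclideanLin A)).le_opNorm x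

lemma lambdaMaxC_of_isEmpty {n : Type*} [Fintype n] [DecidableEq n] [IsEmpty n]
    {A : Matrix n n ℂ} (hA : A.IsHermitian) : lambdaMaxC hA = 0 := by
  simp [lambdaMaxC, Real.iSup_of_isEmpty]

lemma eigenvalue_le_lambdaMaxC {n : Type*} [Fintype n] [DecidableEq n]
    {A : Matrix n n ℂ} (hA : A.IsHermitian) (k : n) :
    hA.eigenvalues k ≤ lambdaMaxC hA :=
  le_ciSup (Set.Finite.bddAbove (Set.finite_range _)) k

lemma rayleigh_le {n : Type*} [Fintype n] [DecidableEq n]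
    {B : Matrix n n ℂ} (hB : B.IsHermitian) (x : EuclideanSpace ℂ n) :
    (inner ℂ x (Matrix.toEuclideanLin B x) : ℂ).re ≤ lambdaMaxC hB * ‖x‖ ^ 2 := by
  cases isEmpty_or_nonempty n with
  | inl h =>
    have hx : x = 0 := Subsingleton.elim x 0
    simp [hx, lambdaMaxC_of_isEmpty]
  | inr h =>
    set b := hB.eigenvectorBasis with hb
    have hBk : ∀ k, Matrix.toEuclideanLin B (b k) = (hB.eigenvalues k : ℂ) • b k := by
      intro k
      apply (WithLp.equiv 2 _).injective
      ext a
      have := congrFun (hB.mulVec_eigenvectorBasis k) a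
      simpa [Matrix.toEuclideanLin_apply, Pi.smul_apply, smul_eq_mul,
        Complex.real_smul] using this
    have hTx : Matrix.toEuclideanLin B x
        = ∑ k, (b.repr x k * (hB.eigenvalues k : ℂ)) • b k := by
      conv_lhs => rw [← b.sum_repr x]
      rw [map_sum]
      refine Finset.sum_congr rfl fun k _ => ?_
      rw [LinearMap.map_smul, hBk, smul_smul]
    have hexp : (inner ℂ x (Matrix.toEuclideanLin B x) : ℂ).re
        = ∑ k, hB.eigenvalues k * ‖b.repr x k‖ ^ 2 := by
      rw [hTx, inner_sum, Complex.re_sum]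
      refine Finset.sum_congr rfl fun k _ => ?_
      rw [inner_smul_right]
      have h1 : (inner ℂ x (b k) : ℂ) = starRingEnd ℂ (b.repr x k) := by
        rw [b.repr_apply_apply, inner_conj_symm]
      rw [h1, show b.repr x k * (hB.eigenvalues k : ℂ) * starRingEnd ℂ (b.repr x k)
            = (hB.eigenvalues k : ℂ) * (b.repr x k * starRingEnd ℂ (b.repr x k)) from by ring,
        Complex.mul_conj]
      simp [Complex.normSq_eq_norm_sq, ← Complex.ofReal_mul, sq]
    have hsum : ∑ k, ‖b.repr x k‖ ^ 2 = ‖x‖ ^ 2 := by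
      have h2 : ‖b.repr x‖ = ‖x‖ := b.repr.norm_map x
      rw [← h2, EuclideanSpace.norm_eq, Real.sq_sqrt (by positivity)]
    calc (inner ℂ x (Matrix.toEuclideanLin B x) : ℂ).re
        = ∑ k, hB.eigenvalues k * ‖b.repr x k‖ ^ 2 := hexp
      _ ≤ ∑ k, lambdaMaxC hB * ‖b.repr x k‖ ^ 2 := by
          refine Finset.sum_le_sum fun k _ => ?_
          exact mul_le_mul_of_nonneg_right (eigenvalue_le_lambdaMaxC hB k) (by positivity)
      _ = lambdaMaxC hB * ‖x‖ ^ 2 := by rw [← Finset.mul_sum, hsum]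

/-- Corollary of the block Gershgorin theorem:
`λ_max(A) ≤ max_i [λ_max(A_{ii}) + Σ_{j≠i} σ_max(A_{ij})]`. -/
theorem lambdaMax_le_block_gershgorin {L : ℕ} (d : Fin L → ℕ)
    (A : Matrix ((i : Fin L) × Fin (d i)) ((i : Fin L) × Fin (d i)) ℂ)
    (hA : A.IsHermitian)
    (hAi : ∀ i : Fin L, (A.submatrix (Sigma.mk i) (Sigma.mk i)).IsHermitian) :
    lambdaMaxC hA ≤
      ⨆ i : Fin L, (lambdaMaxC (hAi i) +
        ∑ j ∈ Finset.univ.erase i,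
          sigmaMaxC (A.submatrix (Sigma.mk i) (Sigma.mk j))) := by
  have bdd : BddAbove (Set.range fun i : Fin L => (lambdaMaxC (hAi i) +
      ∑ j ∈ Finset.univ.erase i, sigmaMaxC (A.submatrix (Sigma.mk i) (Sigma.mk j)))) :=
    Set.Finite.bddAbove (Set.finite_range _)
  cases isEmpty_or_nonempty ((i : Fin L) × Fin (d i)) with
  | inl h =>
    rw [lambdaMaxC_of_isEmpty]
    cases isEmpty_or_nonempty (Fin L) with
    | inl hL => rw [Real.iSup_of_isEmpty]
    | inr hL =>
      obtain ⟨i⟩ := hL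
      have hde : IsEmpty (Fin (d i)) := ⟨fun a => h.false ⟨i, a⟩⟩
      refine le_trans ?_ (le_ciSup bdd i)
      rw [lambdaMaxC_of_isEmpty (hAi i)]
      have h0 : 0 ≤ ∑ j ∈ Finset.univ.erase i,
          sigmaMaxC (A.submatrix (Sigma.mk i) (Sigma.mk j)) :=
        Finset.sum_nonneg fun j _ => sigmaMaxC_nonneg _
      linarith
  | inr h =>
    obtain ⟨k₀, hk₀⟩ := Finite.exists_max hA.eigenvalues
    set lam := hA.eigenvalues k₀ with hlam
    refine ciSup_le fun k => le_trans (hk₀ k) ?_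
    set v : ((i : Fin L) × Fin (d i)) → ℂ := ⇑(hA.eigenvectorBasis k₀) with hv
    have hv2 : A *ᵥ v = lam • v := hA.mulVec_eigenvectorBasis k₀
    have hvne : v ≠ 0 := by
      intro hc
      apply hA.eigenvectorBasis.orthonormal.ne_zero k₀
      apply (WithLp.equiv 2 _).injective
      exact hc
    obtain ⟨s0, hs0⟩ : ∃ s, v s ≠ 0 := by
      by_contra hc; push_neg at hc; exact hvne (funext hc)
    set ξ : (j : Fin L) → EuclideanSpace ℂ (Fin (d j)) := fun j => WithLp.toLp 2 (fun a => v ⟨j, a⟩) with hξ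
    have hLne : Nonempty (Fin L) := ⟨s0.1⟩
    obtain ⟨i, hi⟩ := Finite.exists_max fun j => ‖ξ j‖
    have hξi : 0 < ‖ξ i‖ := by
      refine lt_of_lt_of_le ?_ (hi s0.1)
      refine norm_pos_iff.mpr fun hc => hs0 ?_
      have := congrArg (fun w => w s0.2) hc
      simpa using this
    have key : ∀ a : Fin (d i), (A *ᵥ v) ⟨i, a⟩
        = ∑ j : Fin L, ((A.submatrix (Sigma.mk i) (Sigma.mk j)) *ᵥ (fun b => v ⟨j, b⟩)) a := by
      intro a
      rw [mulVec, dotProduct, ← Finset.univ_sigma_univ, Finset.sum_sigma]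
      rfl
    have hinner : ∀ j, (inner ℂ (ξ i)
          (Matrix.toEuclideanLin (A.submatrix (Sigma.mk i) (Sigma.mk j)) (ξ j)) : ℂ)
        = ∑ a : Fin (d i), (starRingEnd ℂ) (v ⟨i, a⟩) *
            ((A.submatrix (Sigma.mk i) (Sigma.mk j)) *ᵥ (fun b => v ⟨j, b⟩)) a :=
      fun j => by
        rw [PiLp.inner_apply]
        refine Finset.sum_congr rfl fun a _ => ?_
        simp [hξ, Matrix.toEuclideanLin_apply, mul_comm]
    have h2 : (inner ℂ (ξ i) (ξ i) : ℂ).re = ‖ξ i‖ ^ 2 := by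
      have h4 := inner_self_eq_norm_sq (𝕜 := ℂ) (ξ i)
      simpa using h4
    have hsum : ∑ j, (inner ℂ (ξ i)
          (Matrix.toEuclideanLin (A.submatrix (Sigma.mk i) (Sigma.mk j)) (ξ j)) : ℂ)
        = (lam : ℂ) * (inner ℂ (ξ i) (ξ i) : ℂ) := by
      simp only [hinner]
      rw [Finset.sum_comm]
      have h3 : ∀ a : Fin (d i), ∑ j, starRingEnd ℂ (v ⟨i, a⟩) *
            ((A.submatrix (Sigma.mk i) (Sigma.mk j)) *ᵥ (fun b => v ⟨j, b⟩)) a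
          = (lam : ℂ) * (starRingEnd ℂ (v ⟨i, a⟩) * v ⟨i, a⟩) := by
        intro a
        rw [← Finset.mul_sum, ← key a, hv2]
        simp only [Pi.smul_apply, Complex.real_smul, smul_eq_mul]
        ring
      rw [Finset.sum_congr rfl (fun a _ => h3 a), ← Finset.mul_sum]
      rw [PiLp.inner_apply]
      congr 1
      refine Finset.sum_congr rfl fun a _ => ?_
      simp [hξ, mul_comm]
      rw [Complex.mul_conj, Complex.normSq_eq_norm_sq]
      push_cast
      rfl
    have hre : lam * ‖ξ i‖ ^ 2 = ∑ j, (inner ℂ (ξ i)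
          (Matrix.toEuclideanLin (A.submatrix (Sigma.mk i) (Sigma.mk j)) (ξ j)) : ℂ).re := by
      rw [← Complex.re_sum, hsum, Complex.re_ofReal_mul, h2]
    have hterm_j : ∀ j, j ≠ i → (inner ℂ (ξ i)
          (Matrix.toEuclideanLin (A.submatrix (Sigma.mk i) (Sigma.mk j)) (ξ j)) : ℂ).re
        ≤ sigmaMaxC (A.submatrix (Sigma.mk i) (Sigma.mk j)) * ‖ξ i‖ ^ 2 := by
      intro j _
      have hb1 : (inner ℂ (ξ i)
            (Matrix.toEuclideanLin (A.submatrix (Sigma.mk i) (Sigma.mk j)) (ξ j)) : ℂ).re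
          ≤ ‖(inner ℂ (ξ i)
            (Matrix.toEuclideanLin (A.submatrix (Sigma.mk i) (Sigma.mk j)) (ξ j)) : ℂ)‖ :=
        Complex.re_le_norm _
      refine hb1.trans ?_
      refine (norm_inner_le_norm _ _).trans ?_
      have hb2 := norm_toEuclideanLin_le (A.submatrix (Sigma.mk i) (Sigma.mk j)) (ξ j)
      have hb3 : ‖ξ j‖ ≤ ‖ξ i‖ := hi j
      have hσ := sigmaMaxC_nonneg (A.submatrix (Sigma.mk i) (Sigma.mk j))
      calc ‖ξ i‖ * ‖Matrix.toEuclideanLin (A.submatrix (Sigma.mk i) (Sigma.mk j)) (ξ j)‖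
          ≤ ‖ξ i‖ * (sigmaMaxC (A.submatrix (Sigma.mk i) (Sigma.mk j)) * ‖ξ j‖) :=
            mul_le_mul_of_nonneg_left hb2 (norm_nonneg _)
        _ ≤ ‖ξ i‖ * (sigmaMaxC (A.submatrix (Sigma.mk i) (Sigma.mk j)) * ‖ξ i‖) :=
            mul_le_mul_of_nonneg_left (mul_le_mul_of_nonneg_left hb3 hσ) (norm_nonneg _)
        _ = sigmaMaxC (A.submatrix (Sigma.mk i) (Sigma.mk j)) * ‖ξ i‖ ^ 2 := by ring
    have hmain : lam * ‖ξ i‖ ^ 2 ≤ (lambdaMaxC (hAi i) +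
        ∑ j ∈ Finset.univ.erase i, sigmaMaxC (A.submatrix (Sigma.mk i) (Sigma.mk j)))
        * ‖ξ i‖ ^ 2 := by
      rw [hre, ← Finset.add_sum_erase _ _ (Finset.mem_univ i), add_mul, Finset.sum_mul]
      refine add_le_add (rayleigh_le (hAi i) (ξ i)) (Finset.sum_le_sum fun j hj => ?_)
      exact hterm_j j (Finset.ne_of_mem_erase hj)
    have hlam_le : lam ≤ lambdaMaxC (hAi i) +
        ∑ j ∈ Finset.univ.erase i, sigmaMaxC (A.submatrix (Sigma.mk i) (Sigma.mk j)) :=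
      le_of_mul_le_mul_right hmain (pow_pos hξi 2)
    exact hlam_le.trans (le_ciSup bdd i)
end
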